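/- Let $f$ be a continuous function on $\mathbb{R}$ with period $1$, let $a>0$ be irrational, and let $\epsilon>0$. Then there exists $R_0$ such that for all integers $R>R_0$, all $m\in\mathbb{Z}$, and all $\alpha\in\mathbb{R}$: $\big|\frac{1}{R}\sum_{k=mR}^{(m+1)R-1} f((k+\alpha)/a) - \int_0^1 f(x)\,dx\big| < \epsilon$. -/

import Mathlib

open Complex Finset

private 
lemma exp_block_bound (a : ℝ) (ha : Irrational a) (n : ℤ) (hn : n ≠ 0) :
    ∃ C : ℝ, 0 ≤ C ∧ ∀ (R : ℕ) (β : ℝ),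
      ‖∑ j ∈ Finset.range R,
        Complex.exp (2 * Real.pi * Complex.I * n * ((((j:ℝ) + β)/a : ℝ) : ℂ))‖ ≤ C := by
  have haz : a ≠ 0 := fun h => (ha.ne_int 0) (by simp [h])
  set c : ℂ := 2 * Real.pi * Complex.I * n with hc
  set z : ℂ := Complex.exp (c * ((1/a : ℝ) : ℂ)) with hz
  have h2 : (2 * (Real.pi:ℂ) * Complex.I) ≠ 0 := by
    simp [Real.pi_ne_zero, Complex.I_ne_zero]
  have hz1 : z ≠ 1 := by
    intro h
    rw [hz, Complex.exp_eq_one_iff] at h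
    obtain ⟨k, hk⟩ := h
    have hk' : (n : ℂ)/a = k := by
      have h3 : ((n:ℂ)/a) * (2*(Real.pi:ℂ)*Complex.I) = (k:ℂ) * (2*(Real.pi:ℂ)*Complex.I) := by
        rw [← hk]; push_cast; ring
      exact mul_right_cancel₀ h2 h3
    have hre : (n : ℝ)/a = k := by exact_mod_cast hk'
    have hk0 : k ≠ 0 := by
      intro h0; rw [h0] at hre
      simp only [Int.cast_zero, div_eq_zero_iff] at hre
      rcases hre with h | h
      · exact hn (by exact_mod_cast h)
      · exact haz h
    apply ha
    refine ⟨(n : ℚ) / (k : ℚ), ?_⟩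
    have hna : (n : ℝ) = k * a := by field_simp at hre; linarith
    push_cast
    field_simp
    linarith
  have hre0 : ∀ b : ℝ, (c * (b : ℂ)).re = 0 := by
    intro b
    simp [hc, Complex.mul_re, Complex.mul_im]
  have habs : ‖z‖ = 1 := by
    rw [hz, Complex.norm_exp, hre0, Real.exp_zero]
  refine ⟨2 / ‖z - 1‖, by positivity, ?_⟩
  intro R β
  have hterm : ∀ j ∈ Finset.range R,
      Complex.exp (c * ((((j:ℝ) + β)/a : ℝ) : ℂ)) =
        Complex.exp (c * ((β/a : ℝ) : ℂ)) * z ^ j := by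
    intro j _
    rw [hz, ← Complex.exp_nat_mul, ← Complex.exp_add]
    congr 1
    push_cast
    have haz' : (a : ℂ) ≠ 0 := by exact_mod_cast haz
    field_simp
    ring
  rw [Finset.sum_congr rfl hterm, ← Finset.mul_sum, norm_mul]
  have h1 : ‖Complex.exp (c * ((β/a : ℝ) : ℂ))‖ = 1 := by
    rw [Complex.norm_exp, hre0, Real.exp_zero]
  rw [h1, one_mul, geom_sum_eq hz1, norm_div]
  have hd : 0 < ‖z - 1‖ := by
    rw [norm_pos_iff]
    exact sub_ne_zero.mpr hz1
  gcongr
  calc ‖z ^ R - 1‖ = ‖z ^ R - (1:ℂ)‖ := rfl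
    _ ≤ ‖z ^ R‖ + ‖(1:ℂ)‖ := norm_sub_le _ _
    _ = 2 := by
        rw [norm_pow, habs]; norm_num

private lemma char_integral (n : ℤ) :
    (∫ x in (0:ℝ)..1, Complex.exp (2 * Real.pi * Complex.I * n * (x:ℂ))) =
      if n = 0 then 1 else 0 := by
  by_cases hn : n = 0
  · simp [hn]
  · rw [if_neg hn]
    have hc : (2 * Real.pi * Complex.I * n : ℂ) ≠ 0 := by
      simp [Real.pi_ne_zero, Complex.I_ne_zero, hn]
    have := integral_exp_mul_complex (a := (0:ℝ)) (b := 1) hc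
    rw [show ∀ x:ℝ, (2 * Real.pi * Complex.I * n : ℂ) * x
        = (2 * (Real.pi:ℂ) * Complex.I * n) * x from fun x => by push_cast; ring] at this
    rw [this]
    have h1 : Complex.exp (2 * (Real.pi:ℂ) * Complex.I * n * (1:ℝ)) = 1 := by
      rw [show (2 * (Real.pi:ℂ) * Complex.I * n * ((1:ℝ):ℂ)) = n * (2*Real.pi*Complex.I) by
        push_cast; ring]
      exact Complex.exp_int_mul_two_pi_mul_I n
    rw [h1]
    simp


private 
lemma trig_approx (f : ℝ → ℂ) (hf : Continuous f) (hper : Function.Periodic f 1) :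
    ∀ ε > (0:ℝ), ∃ (c : ℤ →₀ ℂ), ∀ x : ℝ,
      ‖f x - ∑ n ∈ c.support, c n *
        Complex.exp (2 * Real.pi * Complex.I * n * (x:ℂ))‖ ≤ ε := by
  intro ε hε
  have hcont : Continuous (hper.lift) := hf.quotient_liftOn' _
  set F : C(AddCircle (1:ℝ), ℂ) := ⟨hper.lift, hcont⟩ with hF
  have hdense : Dense ((Submodule.span ℂ (Set.range (@fourier 1))) : Set C(AddCircle (1:ℝ), ℂ)) := by
    rw [Submodule.dense_iff_topologicalClosure_eq_top]
    exact span_fourier_closure_eq_top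
  obtain ⟨p, hps, hpd⟩ : ∃ p ∈ Submodule.span ℂ (Set.range (@fourier 1)), dist F p < ε := by
    obtain ⟨p, hp1, hp2⟩ := Metric.dense_iff.mp hdense F ε hε
    exact ⟨p, hp2, by rw [dist_comm]; exact Metric.mem_ball.mp hp1⟩
  obtain ⟨c, hc⟩ := Finsupp.mem_span_range_iff_exists_finsupp.mp hps
  refine ⟨c, fun x => ?_⟩
  have hfx : f x = F ((x : AddCircle (1:ℝ))) := (hper.lift_coe x).symm
  have hpx : p ((x : AddCircle (1:ℝ))) =
      ∑ n ∈ c.support, c n * Complex.exp (2 * Real.pi * Complex.I * n * (x:ℂ)) := by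
    rw [← hc]
    rw [Finsupp.sum]
    rw [ContinuousMap.coe_sum, Finset.sum_apply]
    refine Finset.sum_congr rfl fun n _ => ?_
    rw [ContinuousMap.smul_apply, fourier_coe_apply]
    push_cast
    rw [smul_eq_mul]
    ring
  rw [hfx, ← hpx]
  calc ‖F ((x : AddCircle (1:ℝ))) - p ((x : AddCircle (1:ℝ)))‖
      = ‖(F - p) ((x : AddCircle (1:ℝ)))‖ := by rw [ContinuousMap.sub_apply]
    _ ≤ ‖F - p‖ := ContinuousMap.norm_coe_le_norm _ _
    _ ≤ ε := by rw [← dist_eq_norm]; exact hpd.le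

private theorem uniform_weyl_khinchin_main (f : ℝ → ℂ) (hf : Continuous f)
    (hper : Function.Periodic f 1) (a : ℝ) (ha : Irrational a) (hapos : 0 < a)
    (exp_block_bound : ∀ (n : ℤ), n ≠ 0 →
      ∃ C : ℝ, 0 ≤ C ∧ ∀ (R : ℕ) (β : ℝ),
        ‖∑ j ∈ Finset.range R,
          Complex.exp (2 * Real.pi * Complex.I * n * ((((j:ℝ) + β)/a : ℝ) : ℂ))‖ ≤ C)
    (char_integral : ∀ (n : ℤ),
      (∫ x in (0:ℝ)..1, Complex.exp (2 * Real.pi * Complex.I * n * (x:ℂ))) =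
        if n = 0 then 1 else 0)
    (trig_approx : ∀ ε > (0:ℝ), ∃ (c : ℤ →₀ ℂ), ∀ x : ℝ,
      ‖f x - ∑ n ∈ c.support, c n *
        Complex.exp (2 * Real.pi * Complex.I * n * (x:ℂ))‖ ≤ ε) :
    ∀ ε > (0 : ℝ), ∃ R₀ : ℕ, ∀ R : ℕ, R₀ < R → ∀ m : ℤ, ∀ α : ℝ,
      ‖(1 / (R : ℂ)) *
          ∑ j ∈ Finset.range R, f ((((m * R + j : ℤ) : ℝ) + α) / a)
        - ∫ x in (0 : ℝ)..1, f x‖ < ε := by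
  intro ε hε
  have hε4 : (0:ℝ) < ε/4 := by positivity
  obtain ⟨c, hc⟩ := trig_approx (ε/4) hε4
  set e : ℤ → ℝ → ℂ := fun n x => Complex.exp (2 * Real.pi * Complex.I * n * (x:ℂ)) with he
  have hCex : ∀ n : ℤ, ∃ C : ℝ, 0 ≤ C ∧ (n ≠ 0 → ∀ (R : ℕ) (β : ℝ),
      ‖∑ j ∈ Finset.range R, e n (((j:ℝ) + β)/a)‖ ≤ C) := by
    intro n
    by_cases hn : n = 0
    · exact ⟨0, le_refl _, fun h => absurd hn h⟩
    · obtain ⟨C, h0, hb⟩ := exp_block_bound n hn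
      exact ⟨C, h0, fun _ => hb⟩
  choose C hC0 hCb using hCex
  set B : ℝ := ∑ n ∈ c.support.erase 0, ‖c n‖ * C n with hB
  have hB0 : 0 ≤ B :=
    Finset.sum_nonneg fun n _ => mul_nonneg (norm_nonneg _) (hC0 n)
  refine ⟨⌈B / (ε/4)⌉₊, fun R hR m α => ?_⟩
  have hR1 : 1 ≤ R := Nat.one_le_iff_ne_zero.mpr (by omega)
  have hRpos : (0:ℝ) < R := by exact_mod_cast Nat.lt_of_lt_of_le Nat.zero_lt_one hR1
  have hRne : (R:ℂ) ≠ 0 := Nat.cast_ne_zero.mpr (by omega)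
  have hBR : B / R < ε/4 := by
    have h1 : B / (ε/4) < R := lt_of_le_of_lt (Nat.le_ceil _) (by exact_mod_cast hR)
    rw [div_lt_iff₀ hRpos]
    rw [div_lt_iff₀ hε4] at h1
    linarith
  set β : ℝ := (m : ℝ) * R + α with hβ
  have harg : ∀ j : ℕ, (((m * R + j : ℤ) : ℝ) + α) / a = ((j:ℝ) + β)/a := by
    intro j; push_cast; ring
  set P : ℝ → ℂ := fun x => ∑ n ∈ c.support, c n * e n x with hP
  have hPcont : Continuous P := by
    apply continuous_finset_sum
    intro n _
    exact continuous_const.mul (Complex.continuous_exp.comp (by fun_prop))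
  set S : (ℝ → ℂ) → ℂ := fun g => (1/(R:ℂ)) * ∑ j ∈ Finset.range R, g (((j:ℝ)+β)/a) with hS
  have hgoal : ((1 / (R : ℂ)) *
      ∑ j ∈ Finset.range R, f ((((m * R + j : ℤ) : ℝ) + α) / a)) = S f := by
    rw [hS]
    congr 1
    exact Finset.sum_congr rfl fun j _ => by rw [harg]
  rw [hgoal]
  set I : ℂ := ∫ x in (0:ℝ)..1, f x with hI
  set IP : ℂ := ∫ x in (0:ℝ)..1, P x with hIP
  -- term 1
  have ht1 : ‖S f - S P‖ ≤ ε/4 := by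
    have hd : S f - S P = (1/(R:ℂ)) * ∑ j ∈ Finset.range R,
        (f (((j:ℝ)+β)/a) - P (((j:ℝ)+β)/a)) := by
      rw [hS]; rw [Finset.sum_sub_distrib]; ring
    rw [hd, norm_mul]
    have habsR : ‖1/(R:ℂ)‖ = 1/(R:ℝ) := by
      rw [norm_div, norm_one, Complex.norm_natCast]
    rw [habsR]
    calc (1/(R:ℝ)) * ‖∑ j ∈ Finset.range R, (f (((j:ℝ)+β)/a) - P (((j:ℝ)+β)/a))‖
        ≤ (1/(R:ℝ)) * ∑ j ∈ Finset.range R, ‖f (((j:ℝ)+β)/a) - P (((j:ℝ)+β)/a)‖ := by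
          gcongr
          exact norm_sum_le _ _
      _ ≤ (1/(R:ℝ)) * ∑ j ∈ Finset.range R, (ε/4) := by
          gcongr with j hj
          exact hc _
      _ = (1/(R:ℝ)) * (R * (ε/4)) := by rw [Finset.sum_const, Finset.card_range, nsmul_eq_mul]
      _ = ε/4 := by field_simp
  -- IP value
  have hPint : ∀ n : ℤ, IntervalIntegrable (fun x => c n * e n x) MeasureTheory.volume 0 1 := by
    intro n
    exact (continuous_const.mul (Complex.continuous_exp.comp (by fun_prop))).intervalIntegrable 0 1
  have hIPval : IP = ∑ n ∈ c.support, c n * (if n = 0 then 1 else 0) := by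
    rw [hIP, hP]
    rw [intervalIntegral.integral_finset_sum fun n _ => hPint n]
    refine Finset.sum_congr rfl fun n _ => ?_
    rw [intervalIntegral.integral_const_mul, char_integral n]
  -- term 2
  have hSe0 : S (e 0) = 1 := by
    have h1 : ∀ j ∈ Finset.range R, e 0 (((j:ℝ)+β)/a) = 1 := fun j _ => by simp [he]
    rw [hS]
    simp only []
    rw [Finset.sum_congr rfl h1, Finset.sum_const, Finset.card_range, nsmul_eq_mul, mul_one]
    field_simp
  have hSP2 : S P = ∑ n ∈ c.support, c n * S (e n) := by
    simp only [hS, hP, Finset.mul_sum]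
    rw [Finset.sum_comm]
    exact Finset.sum_congr rfl fun n _ =>
      Finset.sum_congr rfl fun j _ => by ring
  have ht2 : ‖S P - IP‖ ≤ B / R := by
    rw [hSP2, hIPval, ← Finset.sum_sub_distrib]
    have hterm : ∀ n ∈ c.support,
        (c n * S (e n) - c n * (if n = 0 then 1 else 0))
          = if n = 0 then 0 else c n * S (e n) := by
      intro n _
      by_cases h : n = 0
      · subst h; rw [if_pos rfl, if_pos rfl, hSe0]; ring
      · rw [if_neg h, if_neg h]; ring
    rw [Finset.sum_congr rfl hterm]
    rw [Finset.sum_ite, Finset.sum_const_zero, zero_add]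
    have hfe : Finset.filter (fun n => ¬ n = 0) c.support = c.support.erase 0 := by
      simp [Finset.filter_ne']
    rw [hfe]
    calc ‖∑ n ∈ c.support.erase 0, c n * S (e n)‖
        ≤ ∑ n ∈ c.support.erase 0, ‖c n * S (e n)‖ := norm_sum_le _ _
      _ ≤ ∑ n ∈ c.support.erase 0, ‖c n‖ * (C n / R) := by
          refine Finset.sum_le_sum fun n hn => ?_
          rw [norm_mul]
          have hSen : ‖S (e n)‖ ≤ C n / R := by
            simp only [hS]
            rw [norm_mul, norm_div, norm_one, Complex.norm_natCast]
            rw [div_mul_eq_mul_div, one_mul]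
            gcongr
            exact hCb n (Finset.ne_of_mem_erase hn) R β
          exact mul_le_mul_of_nonneg_left hSen (norm_nonneg _)
      _ = B / R := by rw [hB, Finset.sum_div]; exact Finset.sum_congr rfl fun n _ => by ring
  -- term 3
  have ht3 : ‖IP - I‖ ≤ ε/4 := by
    have hsub : IP - I = ∫ x in (0:ℝ)..1, (P x - f x) := by
      rw [hIP, hI, intervalIntegral.integral_sub (hPcont.intervalIntegrable 0 1)
        (hf.intervalIntegrable 0 1)]
    rw [hsub]
    have hnb := intervalIntegral.norm_integral_le_of_norm_le_const
      (C := ε/4) (f := fun x => P x - f x) (a := (0:ℝ)) (b := 1) ?_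
    · simpa using hnb
    · intro x _
      rw [← norm_neg, neg_sub]
      exact hc x
  calc ‖S f - I‖
      = ‖(S f - S P) + (S P - IP) + (IP - I)‖ := by
        rw [show S f - I = (S f - S P) + (S P - IP) + (IP - I) from by ring]
    _ ≤ ‖(S f - S P) + (S P - IP)‖ + ‖IP - I‖ :=
        norm_add_le _ _
    _ ≤ ‖S f - S P‖ + ‖S P - IP‖ + ‖IP - I‖ := by
        gcongr; exact norm_add_le _ _
    _ ≤ ε/4 + B/R + ε/4 := by gcongr
    _ < ε/4 + ε/4 + ε/4 := by linarith
    _ < ε := by linarith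

theorem uniform_weyl_khinchin (f : ℝ → ℂ) (hf : Continuous f)
    (hper : Function.Periodic f 1) (a : ℝ) (ha : Irrational a) (hapos : 0 < a) :
    ∀ ε > (0 : ℝ), ∃ R₀ : ℕ, ∀ R : ℕ, R₀ < R → ∀ m : ℤ, ∀ α : ℝ,
      ‖(1 / (R : ℂ)) *
          ∑ j ∈ Finset.range R, f ((((m * R + j : ℤ) : ℝ) + α) / a)
        - ∫ x in (0 : ℝ)..1, f x‖ < ε :=
  uniform_weyl_khinchin_main f hf hper a ha hapos
    (fun n hn => exp_block_bound a ha n hn) char_integral (trig_approx f hf hper)
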